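/- Cross-validation identity lemma: Assume the setting of Lemma 1 holds for every k, and additionally assume there exist matrices H₁,…,H_N (not depending on y₁,…,y_N) such that for all choices of y₁,…,y_N the maximizer f̂ of S(g) = -(1/2)∑_{k=1}^N (y_k - g)ᵀ W_k (y_k - g) + P(g) equals ∑_{k=1}^N H_k y_k, and for every k the maximizer f⁻ᵏ of S⁻ᵏ exists and the above representation also applies when y_k is replaced by any vector. Then for each k, (I - H_k)(f⁻ᵏ - y_k) = f̂ - y_k. -/

import Mathlib

open Matrix Finset

theorem stmt_2 {n N : ℕ} (k : Fin N)
    (W : Fin N → Matrix (Fin n) (Fin n) ℝ) (hW : ∀ r, (W r).PosDef)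
    (P : (Fin n → ℝ) → ℝ) (y : Fin N → Fin n → ℝ)
    (H : Fin N → Matrix (Fin n) (Fin n) ℝ)
    -- representation hypothesis: for any data u₁,…,u_N, any maximizer of the
    -- full objective equals ∑ r, H_r u_r
    (hrep : ∀ (u : Fin N → Fin n → ℝ) (f : Fin n → ℝ),
      (∀ g : Fin n → ℝ,
        -(1/2) * ∑ r, (u r - g) ⬝ᵥ ((W r) *ᵥ (u r - g)) + P g ≤
        -(1/2) * ∑ r, (u r - f) ⬝ᵥ ((W r) *ᵥ (u r - f)) + P f) →
      f = ∑ r, (H r) *ᵥ (u r))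
    (fmk fhat : Fin n → ℝ)
    -- f⁻ᵏ maximizes the leave-one-out objective
    (hfmk : ∀ g : Fin n → ℝ,
      -(1/2) * ∑ r ∈ univ.erase k, (y r - g) ⬝ᵥ ((W r) *ᵥ (y r - g)) + P g ≤
      -(1/2) * ∑ r ∈ univ.erase k, (y r - fmk) ⬝ᵥ ((W r) *ᵥ (y r - fmk)) + P fmk)
    -- f̂ maximizes the full objective
    (hfhat : ∀ g : Fin n → ℝ,
      -(1/2) * ∑ r, (y r - g) ⬝ᵥ ((W r) *ᵥ (y r - g)) + P g ≤
      -(1/2) * ∑ r, (y r - fhat) ⬝ᵥ ((W r) *ᵥ (y r - fhat)) + P fhat) :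
    (1 - H k) *ᵥ (fmk - y k) = fhat - y k := by
  set u := Function.update y k fmk with hu
  have huk : u k = fmk := Function.update_self k fmk y
  have hur : ∀ r ∈ univ.erase k, u r = y r := fun r hr =>
    Function.update_of_ne (Finset.ne_of_mem_erase hr) fmk y
  have hsplit : ∀ v : Fin n → ℝ, ∑ r, (u r - v) ⬝ᵥ (W r *ᵥ (u r - v)) =
      (fmk - v) ⬝ᵥ (W k *ᵥ (fmk - v)) +
        ∑ r ∈ univ.erase k, (y r - v) ⬝ᵥ (W r *ᵥ (y r - v)) := by
    intro v
    rw [← Finset.add_sum_erase _ _ (mem_univ k), huk]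
    congr 1
    exact Finset.sum_congr rfl fun r hr => by rw [hur r hr]
  have hmax : ∀ g : Fin n → ℝ,
      -(1/2) * ∑ r, (u r - g) ⬝ᵥ (W r *ᵥ (u r - g)) + P g ≤
      -(1/2) * ∑ r, (u r - fmk) ⬝ᵥ (W r *ᵥ (u r - fmk)) + P fmk := by
    intro g
    rw [hsplit g, hsplit fmk]
    have h0 : (fmk - fmk) ⬝ᵥ (W k *ᵥ (fmk - fmk)) = 0 := by simp
    have hnn : 0 ≤ (fmk - g) ⬝ᵥ (W k *ᵥ (fmk - g)) := by
      have := (hW k).posSemidef.dotProduct_mulVec_nonneg (fmk - g)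
      simpa using this
    have := hfmk g
    rw [h0]
    linarith
  have h1 := hrep u fmk hmax
  have h2 := hrep y fhat hfhat
  have hsum : ∀ w : Fin N → Fin n → ℝ, ∑ r, H r *ᵥ w r =
      H k *ᵥ w k + ∑ r ∈ univ.erase k, H r *ᵥ w r := fun w =>
    (Finset.add_sum_erase _ _ (mem_univ k)).symm
  have hcong : ∑ r ∈ univ.erase k, H r *ᵥ u r = ∑ r ∈ univ.erase k, H r *ᵥ y r :=
    Finset.sum_congr rfl fun r hr => by rw [hur r hr]
  rw [hsum, huk, hcong] at h1
  rw [hsum] at h2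
  have key : fmk - H k *ᵥ fmk = fhat - H k *ᵥ y k := by
    rw [h2]
    have : fmk - H k *ᵥ fmk = ∑ r ∈ univ.erase k, H r *ᵥ y r :=
      sub_eq_iff_eq_add.mpr (h1.trans (add_comm _ _))
    rw [this]; abel
  rw [Matrix.sub_mulVec, Matrix.one_mulVec, Matrix.mulVec_sub]
  have := key
  ext i
  have h := congrFun key i
  simp only [Pi.sub_apply] at h ⊢
  linarith
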